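/- arXiv:math/0211377 — 2 statements merged into one kernel-verified Lean document; each statement's English description precedes it below -/
import Mathlib

section
/- Let V be a p-dimensional subspace of Poly_d (complex polynomials of degree at most d) with no common zero, and let W_V be its Wronskian (monic, the Wronskian of any basis up to scalar). Then deg W_V ≤ p(d+1−p). -/
open Polynomial

/-- The Wronskian determinant of a finite family of polynomials. -/
noncomputable def wronskianFin (p : ℕ) (f : Fin p → Polynomial ℂ) : Polynomial ℂ :=
  Matrix.det (Matrix.of fun i j : Fin p => (⇑Polynomial.derivative)^[(i : ℕ)] (f j))

lemma iterate_derivative_sum' {ι : Type*} (s : Finset ι) (i : ℕ) (g : ι → Polynomial ℂ) :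
    (⇑Polynomial.derivative)^[i] (∑ k ∈ s, g k) = ∑ k ∈ s, (⇑Polynomial.derivative)^[i] (g k) := by
  induction i with
  | zero => simp
  | succ n IH =>
    rw [Function.iterate_succ_apply', IH, map_sum]
    simp [Function.iterate_succ_apply']

/-- Degree bound for a determinant with column-wise degree bounds. -/
lemma natDegree_det_le_sum {n : ℕ} (M : Matrix (Fin n) (Fin n) (Polynomial ℂ))
    (f : Fin n → ℕ) (h : ∀ i j, (M i j).natDegree ≤ f j) :
    M.det.natDegree ≤ ∑ j, f j := by
  rw [Matrix.det_apply']
  refine natDegree_sum_le_of_forall_le _ _ fun σ _ => ?_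
  refine natDegree_mul_le.trans ?_
  rw [natDegree_intCast, zero_add]
  refine (natDegree_prod_le _ _).trans ?_
  exact Finset.sum_le_sum fun i _ => h (σ i) i


/-- Every finite-dimensional space of polynomials of bounded degree has a "basis"
(spanning family) with strictly increasing degrees. -/
lemma exists_chain (p : ℕ) : ∀ (D : ℕ) (V : Submodule ℂ (Polynomial ℂ)),
    Module.finrank ℂ V = p → (∀ g ∈ V, g.natDegree ≤ D) →
    ∃ c : Fin p → Polynomial ℂ, (∀ j, c j ∈ V) ∧ (∀ j, c j ≠ 0) ∧
      StrictMono (fun j => (c j).natDegree) ∧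
      ∀ g ∈ V, g ∈ Submodule.span ℂ (Set.range c) := by
  induction p with
  | zero =>
    intro D V hdim hdeg
    have hVle : V ≤ Polynomial.degreeLT ℂ (D + 1) := by
      intro g hg
      rw [Polynomial.mem_degreeLT]
      exact lt_of_le_of_lt degree_le_natDegree (by exact_mod_cast Nat.lt_succ_of_le (hdeg g hg))
    haveI : FiniteDimensional ℂ (Polynomial.degreeLT ℂ (D + 1)) :=
      (Polynomial.degreeLTEquiv ℂ (D + 1)).symm.finiteDimensional
    haveI : FiniteDimensional ℂ V := Submodule.finiteDimensional_of_le hVle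
    have hV : V = ⊥ := Submodule.finrank_eq_zero.mp hdim
    refine ⟨fun i => i.elim0, fun i => i.elim0, fun i => i.elim0,
      fun a => a.elim0, fun g hg => ?_⟩
    rw [hV, Submodule.mem_bot] at hg
    rw [hg]
    exact Submodule.zero_mem _
  | succ p ih =>
    intro D V hdim hdeg
    -- V is nontrivial
    have hVne : V ≠ ⊥ := by
      intro h
      rw [h] at hdim
      simp at hdim
    obtain ⟨f₀, hf₀V, hf₀⟩ := (Submodule.ne_bot_iff V).mp hVne
    -- maximal degree m, attained by a nonzero f ∈ V
    set S : Set ℕ := {n | ∃ g ∈ V, g ≠ 0 ∧ g.natDegree = n} with hS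
    have hSne : S.Nonempty := ⟨f₀.natDegree, f₀, hf₀V, hf₀, rfl⟩
    have hSbdd : BddAbove S := ⟨D, fun n ⟨g, hgV, _, hgn⟩ => hgn ▸ hdeg g hgV⟩
    set m := sSup S with hm
    obtain ⟨f, hfV, hf0, hfm⟩ : m ∈ S := Nat.sSup_mem hSne hSbdd
    have hmax : ∀ g ∈ V, g.natDegree ≤ m := by
      intro g hg
      by_cases hg0 : g = 0
      · simp [hg0]
      · exact le_csSup hSbdd ⟨g, hg, hg0, rfl⟩
    have hlc : f.coeff m ≠ 0 := by
      rw [← hfm, coeff_natDegree]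
      exact leadingCoeff_ne_zero.mpr hf0
    -- the kernel of the leading-coefficient map
    set L : V →ₗ[ℂ] ℂ := (Polynomial.lcoeff ℂ m).comp V.subtype with hL
    have hVle : V ≤ Polynomial.degreeLT ℂ (D + 1) := by
      intro g hg
      rw [Polynomial.mem_degreeLT]
      exact lt_of_le_of_lt degree_le_natDegree (by exact_mod_cast Nat.lt_succ_of_le (hdeg g hg))
    haveI : FiniteDimensional ℂ (Polynomial.degreeLT ℂ (D + 1)) :=
      (Polynomial.degreeLTEquiv ℂ (D + 1)).symm.finiteDimensional
    haveI : FiniteDimensional ℂ V := Submodule.finiteDimensional_of_le hVle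
    have hrange : LinearMap.range L = ⊤ := by
      rw [eq_top_iff]
      rintro x -
      refine ⟨(x / f.coeff m) • ⟨f, hfV⟩, ?_⟩
      simp only [hL, LinearMap.comp_apply, map_smul, Submodule.coe_subtype, lcoeff_apply,
        smul_eq_mul]
      field_simp
    have hker : Module.finrank ℂ (LinearMap.ker L) = p := by
      have h1 := LinearMap.finrank_range_add_finrank_ker L
      rw [hrange, hdim, finrank_top, Module.finrank_self] at h1
      omega
    set V' : Submodule ℂ (Polynomial ℂ) := Submodule.map V.subtype (LinearMap.ker L) with hV'
    have hdimV' : Module.finrank ℂ V' = p := by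
      rw [← hker]
      exact (Submodule.equivMapOfInjective V.subtype V.injective_subtype
        (LinearMap.ker L)).symm.finrank_eq
    have hmemV' : ∀ g, g ∈ V' ↔ (g ∈ V ∧ g.coeff m = 0) := by
      intro g
      constructor
      · rintro ⟨⟨v, hv⟩, hvk, rfl⟩
        refine ⟨hv, ?_⟩
        simpa [hL, lcoeff_apply] using hvk
      · rintro ⟨hgV, hgc⟩
        exact ⟨⟨g, hgV⟩, by simpa [hL, LinearMap.mem_ker, lcoeff_apply] using hgc, rfl⟩
    obtain ⟨c', hc'V, hc'0, hc'mono, hc'span⟩ := ih D V' hdimV'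
      (fun g hg => hdeg g ((hmemV' g).mp hg).1)
    have hlt : ∀ j, (c' j).natDegree < m := by
      intro j
      obtain ⟨hj1, hj2⟩ := (hmemV' _).mp (hc'V j)
      refine lt_of_le_of_ne (hmax _ hj1) fun h => ?_
      rw [← h, coeff_natDegree] at hj2
      exact hc'0 j (leadingCoeff_eq_zero.mp hj2)
    set c : Fin (p + 1) → Polynomial ℂ := Fin.snoc c' f with hc
    have hrangesub : Set.range c' ⊆ Set.range c := by
      rintro x ⟨j, rfl⟩
      exact ⟨j.castSucc, by simp [hc, Fin.snoc_castSucc]⟩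
    refine ⟨c, ?_, ?_, ?_, ?_⟩
    · intro j
      induction j using Fin.lastCases with
      | last => simpa [hc, Fin.snoc_last] using hfV
      | cast j => simpa [hc, Fin.snoc_castSucc] using ((hmemV' _).mp (hc'V j)).1
    · intro j
      induction j using Fin.lastCases with
      | last => simpa [hc, Fin.snoc_last] using hf0
      | cast j => simpa [hc, Fin.snoc_castSucc] using hc'0 j
    · intro a b hab
      induction b using Fin.lastCases with
      | last =>
        obtain ⟨a', rfl⟩ : ∃ a' : Fin p, a = a'.castSucc := by
          rcases Fin.eq_castSucc_or_eq_last a with h | h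
          · exact h
          · exact absurd hab (by simp [h])
        simp only [hc, Fin.snoc_castSucc, Fin.snoc_last]
        rw [hfm]
        exact hlt a'
      | cast b =>
        obtain ⟨a', rfl⟩ : ∃ a' : Fin p, a = a'.castSucc := by
          rcases Fin.eq_castSucc_or_eq_last a with h | h
          · exact h
          · exact absurd (hab.trans (Fin.castSucc_lt_last b)) (by simp [h])
        simp only [hc, Fin.snoc_castSucc]
        exact hc'mono (Fin.castSucc_lt_castSucc_iff.mp hab)
    · intro g hg
      set t : ℂ := g.coeff m / f.coeff m with ht
      have hsub : g - t • f ∈ V' := by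
        rw [hmemV']
        refine ⟨Submodule.sub_mem V hg (Submodule.smul_mem V t hfV), ?_⟩
        simp only [coeff_sub, coeff_smul, smul_eq_mul, ht]
        field_simp
        ring
      have h1 : g - t • f ∈ Submodule.span ℂ (Set.range c) :=
        Submodule.span_mono hrangesub (hc'span _ hsub)
      have h2 : f ∈ Submodule.span ℂ (Set.range c) :=
        Submodule.subset_span ⟨Fin.last p, by simp [hc, Fin.snoc_last]⟩
      have : g = (g - t • f) + t • f := by ring
      rw [this]
      exact Submodule.add_mem _ h1 (Submodule.smul_mem _ t h2)

/-- Strictly monotone ℕ-valued functions on `Fin p` grow at least linearly. -/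
lemma strictMono_gap {p : ℕ} (g : Fin p → ℕ) (hg : StrictMono g) :
    ∀ (k : ℕ) (i j : Fin p), (j : ℕ) = (i : ℕ) + k → g i + k ≤ g j := by
  intro k
  induction k with
  | zero =>
    intro i j h
    have : i = j := Fin.ext (by omega)
    subst this
    simp
  | succ k IH =>
    intro i j h
    have hlt : (i : ℕ) + k < p := by have := j.isLt; omega
    have h1 := IH i ⟨(i : ℕ) + k, hlt⟩ rfl
    have h2 : g ⟨(i : ℕ) + k, hlt⟩ < g j := hg (by rw [Fin.lt_def]; simp; omega)
    omega

/-- If `V` is a `p`-dimensional subspace of `Poly_d` with no common zero, then the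
Wronskian of (any basis of) `V` has degree at most `p(d+1−p)`. -/
theorem stmt9 (p d : ℕ) (hp : 1 ≤ p) (hpd : p ≤ d + 1)
    (V : Submodule ℂ (Polynomial ℂ))
    (hdim : Module.finrank ℂ V = p)
    (hdeg : ∀ f ∈ V, f.natDegree ≤ d)
    (hnocz : ¬ ∃ x : ℂ, ∀ f ∈ V, Polynomial.eval x f = 0)
    (b : Module.Basis (Fin p) ℂ V) :
    (wronskianFin p (fun i => (b i : Polynomial ℂ))).natDegree ≤ p * (d + 1 - p) := by
  obtain ⟨c, hcV, hc0, hcmono, hcspan⟩ := exists_chain p d V hdim hdeg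
  -- degree bound for the chain
  have hcd : ∀ j : Fin p, (c j).natDegree ≤ d + 1 - p + j := by
    intro j
    have hjp : (j : ℕ) ≤ p - 1 := by have := j.isLt; omega
    have htop : ((⟨p - 1, by omega⟩ : Fin p) : ℕ) = (j : ℕ) + (p - 1 - j) := by simp; omega
    have h1 := strictMono_gap _ hcmono (p - 1 - j) j ⟨p - 1, by omega⟩ htop
    have h2 : (c (⟨p - 1, by omega⟩ : Fin p)).natDegree ≤ d := hdeg _ (hcV _)
    have := j.isLt
    omega
  -- the Wronskian matrix of the chain
  set Mc : Matrix (Fin p) (Fin p) (Polynomial ℂ) :=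
    Matrix.of fun i j : Fin p => (⇑Polynomial.derivative)^[(i : ℕ)] (c j) with hMc
  -- degree bound for det Mc via row rescaling
  have hdet : Mc.det.natDegree ≤ p * (d + 1 - p) := by
    set M' : Matrix (Fin p) (Fin p) (Polynomial ℂ) :=
      Matrix.of (fun i j : Fin p => (X : Polynomial ℂ) ^ (i : ℕ) * Mc i j) with hM'
    have hdet' : M'.det = (X : Polynomial ℂ) ^ (∑ i : Fin p, (i : ℕ)) * Mc.det := by
      rw [hM', Matrix.det_mul_column, ← Finset.prod_pow_eq_pow_sum]
    have hboundM' : M'.det.natDegree ≤ ∑ j : Fin p, (d + 1 - p + (j : ℕ)) := by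
      refine natDegree_det_le_sum _ _ fun i j => ?_
      by_cases hij : (c j).natDegree < (i : ℕ)
      · simp [hM', hMc, iterate_derivative_eq_zero hij]
      · refine (natDegree_mul_le).trans ?_
        have h1 : ((X : Polynomial ℂ) ^ (i : ℕ)).natDegree = (i : ℕ) := natDegree_X_pow _
        have h2 : ((⇑Polynomial.derivative)^[(i : ℕ)] (c j)).natDegree ≤ (c j).natDegree - i :=
          natDegree_iterate_derivative _ _
        have h3 := hcd j
        show ((X : Polynomial ℂ) ^ (i : ℕ)).natDegree +
          ((⇑Polynomial.derivative)^[(i : ℕ)] (c j)).natDegree ≤ _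
        omega
    have hsum : ∑ j : Fin p, (d + 1 - p + (j : ℕ)) = p * (d + 1 - p) + ∑ j : Fin p, (j : ℕ) := by
      rw [Finset.sum_add_distrib, Finset.sum_const, Finset.card_univ, Fintype.card_fin,
        smul_eq_mul]
    by_cases hz : Mc.det = 0
    · simp [hz]
    · have hXne : ((X : Polynomial ℂ) ^ (∑ i : Fin p, (i : ℕ))) ≠ 0 := pow_ne_zero _ X_ne_zero
      have : M'.det.natDegree = (∑ i : Fin p, (i : ℕ)) + Mc.det.natDegree := by
        rw [hdet', natDegree_mul hXne hz, natDegree_X_pow]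
      omega
  -- express the basis Wronskian through the chain Wronskian
  have hW : ∀ j : Fin p, ∃ a : Fin p → ℂ, (b j : Polynomial ℂ) = ∑ k, a k • c k := by
    intro j
    obtain ⟨a, ha⟩ := (Submodule.mem_span_range_iff_exists_fun ℂ).mp (hcspan _ (b j).2)
    exact ⟨a, ha.symm⟩
  choose a ha using hW
  set B : Matrix (Fin p) (Fin p) (Polynomial ℂ) :=
    C.mapMatrix (Matrix.of fun k j : Fin p => a j k) with hB
  have hfact : (Matrix.of fun i j : Fin p =>
      (⇑Polynomial.derivative)^[(i : ℕ)] ((b j : Polynomial ℂ))) = Mc * B := by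
    refine Matrix.ext fun i j => ?_
    rw [Matrix.mul_apply]
    simp only [Matrix.of_apply, hMc, hB, RingHom.mapMatrix_apply, Matrix.map_apply]
    rw [ha j]
    rw [iterate_derivative_sum']
    apply Finset.sum_congr rfl
    intro k _
    rw [iterate_derivative_smul, smul_eq_C_mul, mul_comm]
  rw [wronskianFin, hfact, Matrix.det_mul]
  have hdetB : B.det = C (Matrix.of fun k j : Fin p => a j k).det := by
    rw [hB, ← RingHom.map_det]
  refine natDegree_mul_le.trans ?_
  rw [hdetB, natDegree_C]
  omega
end

section
/- Let V be a p-dimensional space of complex polynomials and suppose every element of a basis P_1,...,P_p has a root at z of multiplicity at least ρ_1 > ρ_2 > ... > ρ_p ≥ 0 respectively (P_l vanishes to order ≥ ρ_l at z). Then the Wronskian W(P_1,...,P_p) has a root at z of multiplicity at least ρ_1 + ... + ρ_p − p(p−1)/2. -/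
open Polynomial

lemma deriv_dvd_aux (z : ℂ) (n : ℕ) (P : Polynomial ℂ) (h : (X - C z) ^ n ∣ P) :
    (X - C z) ^ (n - 1) ∣ derivative P := by
  obtain ⟨Q, rfl⟩ := h
  rw [derivative_mul]
  refine dvd_add (Dvd.dvd.mul_right ?_ _) (Dvd.dvd.mul_right ?_ _)
  · rw [derivative_pow]
    exact Dvd.dvd.mul_right (dvd_mul_left _ _) _
  · exact pow_dvd_pow _ (Nat.sub_le _ _)

lemma iter_deriv_dvd (z : ℂ) (n : ℕ) (P : Polynomial ℂ) (h : (X - C z) ^ n ∣ P) :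
    ∀ k, (X - C z) ^ (n - k) ∣ (⇑derivative)^[k] P := by
  intro k
  induction k with
  | zero => simpa using h
  | succ k ih =>
    rw [Function.iterate_succ_apply']
    have := deriv_dvd_aux z (n - k) _ ih
    rwa [Nat.sub_sub] at this

/-- If `P_l` vanishes at `z` to order at least `ρ_l`, with `ρ₁ > ρ₂ > … > ρ_p ≥ 0`, then
the Wronskian of `P₁,…,P_p` vanishes at `z` to order at least `ρ₁+…+ρ_p − p(p−1)/2`. -/
theorem stmt11 (p : ℕ) (P : Fin p → Polynomial ℂ) (ρ : Fin p → ℕ) (z : ℂ)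
    (hanti : StrictAnti ρ)
    (hvan : ∀ l, (X - C z) ^ (ρ l) ∣ P l) :
    (X - C z) ^ ((∑ l : Fin p, ρ l) - p * (p - 1) / 2) ∣ wronskianFin p P := by
  unfold wronskianFin
  rw [Matrix.det_apply]
  apply Finset.dvd_sum
  intro σ _
  rw [Units.smul_def, zsmul_eq_mul]
  apply Dvd.dvd.mul_left
  have key : ∀ i : Fin p, (X - C z) ^ (ρ i - (σ i : ℕ)) ∣
      (Matrix.of fun i j : Fin p => (⇑derivative)^[(i : ℕ)] (P j)) (σ i) i := by
    intro i
    exact iter_deriv_dvd z (ρ i) (P i) (hvan i) (σ i : ℕ)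
  have h1 : (∏ i : Fin p, (X - C z) ^ (ρ i - (σ i : ℕ))) ∣
      ∏ i : Fin p, (Matrix.of fun i j : Fin p => (⇑derivative)^[(i : ℕ)] (P j)) (σ i) i :=
    Finset.prod_dvd_prod_of_dvd _ _ fun i _ => key i
  refine dvd_trans ?_ h1
  rw [Finset.prod_pow_eq_pow_sum]
  apply pow_dvd_pow
  have hσ : ∑ i : Fin p, (σ i : ℕ) = p * (p - 1) / 2 := by
    rw [Equiv.sum_comp σ (fun i : Fin p => (i : ℕ)),
      Fin.sum_univ_eq_sum_range (fun i => i) p, Finset.sum_range_id]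
  rw [← hσ, tsub_le_iff_right, ← Finset.sum_add_distrib]
  exact Finset.sum_le_sum fun i _ => le_tsub_add
end
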